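/- Reduction to Bernoulli: let π ∈ (0,1/2], λ ∈ (0,1), and c > 0. Suppose that for every (p,q) ∈ [0,1]², e_π(Ber(p),Ber(q)) ≥ c·π^λ(1−π)^{1−λ}(β_λ(p,q))². Then for every pair of probability distributions P, Q on a finite set X, e_π(P,Q) ≥ c·π^λ(1−π)^{1−λ}(β_λ(P,Q))². -/

import Mathlib

open Real Finset

/-- Hellinger-λ affinity between two distributions on a finite set. -/
noncomputable def betaAff {X : Type*} [Fintype X] (l : ℝ) (P Q : X → ℝ) : ℝ :=
  ∑ x, P x ^ l * Q x ^ (1 - l)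

/-- Optimal one-shot Bayes error with prior pr. -/
noncomputable def bayesErr {X : Type*} [Fintype X] (pr : ℝ) (P Q : X → ℝ) : ℝ :=
  ∑ x, min (pr * P x) ((1 - pr) * Q x)

/-- Bayes error for a pair of Bernoulli distributions Ber(p), Ber(q) with prior pr. -/
noncomputable def bayesErrB (pr p q : ℝ) : ℝ :=
  min (pr * p) ((1 - pr) * q) + min (pr * (1 - p)) ((1 - pr) * (1 - q))

/-- Hellinger-λ affinity for Bernoulli distributions. -/
noncomputable def betaB (l p q : ℝ) : ℝ :=
  p ^ l * q ^ (1 - l) + (1 - p) ^ l * (1 - q) ^ (1 - l)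

/-- Hölder-type sum inequality (data processing for binary quantisation). -/
lemma sum_rpow_mul_le {X : Type*} [Fintype X] {l : ℝ} (hl0 : 0 < l) (hl1 : l < 1)
    {P Q : X → ℝ} (hP0 : ∀ x, 0 ≤ P x) (hQ0 : ∀ x, 0 ≤ Q x) (S : Finset X) :
    ∑ x ∈ S, P x ^ l * Q x ^ (1 - l) ≤ (∑ x ∈ S, P x) ^ l * (∑ x ∈ S, Q x) ^ (1 - l) := by
  set a := ∑ x ∈ S, P x with ha
  set b := ∑ x ∈ S, Q x with hb
  have ha0 : 0 ≤ a := Finset.sum_nonneg fun x _ => hP0 x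
  have hb0 : 0 ≤ b := Finset.sum_nonneg fun x _ => hQ0 x
  have hl1' : 0 < 1 - l := by linarith
  rcases eq_or_lt_of_le ha0 with ha' | ha'
  · have hz : ∀ x ∈ S, P x = 0 := by
      intro x hx
      have := (Finset.sum_eq_zero_iff_of_nonneg (fun y _ => hP0 y)).1 ha'.symm
      exact this x hx
    have : ∑ x ∈ S, P x ^ l * Q x ^ (1 - l) = 0 := by
      apply Finset.sum_eq_zero
      intro x hx
      rw [hz x hx, Real.zero_rpow hl0.ne', zero_mul]
    rw [this]
    positivity
  rcases eq_or_lt_of_le hb0 with hb' | hb'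
  · have hz : ∀ x ∈ S, Q x = 0 := by
      intro x hx
      have := (Finset.sum_eq_zero_iff_of_nonneg (fun y _ => hQ0 y)).1 hb'.symm
      exact this x hx
    have : ∑ x ∈ S, P x ^ l * Q x ^ (1 - l) = 0 := by
      apply Finset.sum_eq_zero
      intro x hx
      rw [hz x hx, Real.zero_rpow hl1'.ne', mul_zero]
    rw [this]
    positivity
  -- main case: a, b > 0
  have key : ∀ x ∈ S, P x ^ l * Q x ^ (1 - l)
      ≤ a ^ l * b ^ (1 - l) * (l * (P x / a) + (1 - l) * (Q x / b)) := by
    intro x hx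
    have h1 : P x ^ l * Q x ^ (1 - l)
        = a ^ l * b ^ (1 - l) * ((P x / a) ^ l * (Q x / b) ^ (1 - l)) := by
      rw [Real.div_rpow (hP0 x) ha0, Real.div_rpow (hQ0 x) hb0]
      field_simp
    rw [h1]
    have := Real.geom_mean_le_arith_mean2_weighted hl0.le hl1'.le
      (div_nonneg (hP0 x) ha0) (div_nonneg (hQ0 x) hb0) (by ring)
    exact mul_le_mul_of_nonneg_left this (by positivity)
  calc ∑ x ∈ S, P x ^ l * Q x ^ (1 - l)
      ≤ ∑ x ∈ S, a ^ l * b ^ (1 - l) * (l * (P x / a) + (1 - l) * (Q x / b)) :=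
        Finset.sum_le_sum key
    _ = a ^ l * b ^ (1 - l) := by
        rw [← Finset.mul_sum]
        have : ∑ x ∈ S, (l * (P x / a) + (1 - l) * (Q x / b)) = 1 := by
          rw [Finset.sum_add_distrib, ← Finset.mul_sum, ← Finset.mul_sum]
          simp only [div_eq_mul_inv, ← Finset.sum_mul, ← ha, ← hb]
          field_simp
          ring
        rw [this, mul_one]

theorem reduction_to_bernoulli (pr l c : ℝ)
    (hpr : pr ∈ Set.Ioc (0 : ℝ) (1 / 2)) (hl : l ∈ Set.Ioo (0 : ℝ) 1) (hc : 0 < c)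
    (hBer : ∀ p ∈ Set.Icc (0 : ℝ) 1, ∀ q ∈ Set.Icc (0 : ℝ) 1,
      bayesErrB pr p q ≥ c * pr ^ l * (1 - pr) ^ (1 - l) * (betaB l p q) ^ 2)
    {X : Type*} [Fintype X]
    (P Q : X → ℝ) (hP0 : ∀ x, 0 ≤ P x) (hQ0 : ∀ x, 0 ≤ Q x)
    (hP1 : ∑ x, P x = 1) (hQ1 : ∑ x, Q x = 1) :
    bayesErr pr P Q ≥ c * pr ^ l * (1 - pr) ^ (1 - l) * (betaAff l P Q) ^ 2 := by
  classical
  obtain ⟨hpr0, hpr2⟩ := hpr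
  obtain ⟨hl0, hl1⟩ := hl
  set A : Finset X := Finset.univ.filter (fun x => pr * P x ≤ (1 - pr) * Q x) with hA
  set p := ∑ x ∈ A, P x with hp
  set q := ∑ x ∈ A, Q x with hq
  have hp0 : 0 ≤ p := Finset.sum_nonneg fun x _ => hP0 x
  have hq0 : 0 ≤ q := Finset.sum_nonneg fun x _ => hQ0 x
  have hp1 : p ≤ 1 := by
    rw [← hP1]; exact Finset.sum_le_sum_of_subset_of_nonneg (Finset.subset_univ A)
      (fun x _ _ => hP0 x)
  have hq1 : q ≤ 1 := by
    rw [← hQ1]; exact Finset.sum_le_sum_of_subset_of_nonneg (Finset.subset_univ A)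
      (fun x _ _ => hQ0 x)
  have hPc : ∑ x ∈ Aᶜ, P x = 1 - p := by
    have := Finset.sum_add_sum_compl A P
    rw [hP1] at this; linarith
  have hQc : ∑ x ∈ Aᶜ, Q x = 1 - q := by
    have := Finset.sum_add_sum_compl A Q
    rw [hQ1] at this; linarith
  -- Step 1: bayesErr = pr*p + (1-pr)*(1-q)
  have hErr : bayesErr pr P Q = pr * p + (1 - pr) * (1 - q) := by
    unfold bayesErr
    rw [← Finset.sum_add_sum_compl A]
    have h1 : ∑ x ∈ A, min (pr * P x) ((1 - pr) * Q x) = ∑ x ∈ A, pr * P x := by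
      apply Finset.sum_congr rfl
      intro x hx
      exact min_eq_left (by simpa [hA] using hx)
    have h2 : ∑ x ∈ Aᶜ, min (pr * P x) ((1 - pr) * Q x) = ∑ x ∈ Aᶜ, (1 - pr) * Q x := by
      apply Finset.sum_congr rfl
      intro x hx
      have : ¬ pr * P x ≤ (1 - pr) * Q x := by
        simpa [hA] using (Finset.mem_compl.1 hx)
      exact min_eq_right (le_of_lt (not_le.1 this))
    rw [h1, h2, ← Finset.mul_sum, ← Finset.mul_sum, ← hp, hQc]
  -- Step 2: bayesErrB pr p q ≤ bayesErr
  have hEB : bayesErrB pr p q ≤ bayesErr pr P Q := by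
    rw [hErr]
    unfold bayesErrB
    have := min_le_left (pr * p) ((1 - pr) * q)
    have := min_le_right (pr * (1 - p)) ((1 - pr) * (1 - q))
    linarith
  -- Step 3: betaAff ≤ betaB p q
  have hBA : betaAff l P Q ≤ betaB l p q := by
    unfold betaAff betaB
    rw [← Finset.sum_add_sum_compl A]
    have h1 := sum_rpow_mul_le hl0 hl1 hP0 hQ0 A
    have h2 := sum_rpow_mul_le hl0 hl1 hP0 hQ0 Aᶜ
    rw [hPc, hQc] at h2
    exact add_le_add (by simpa using h1) h2
  have hBA0 : 0 ≤ betaAff l P Q := by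
    unfold betaAff
    apply Finset.sum_nonneg
    intro x _
    exact mul_nonneg (Real.rpow_nonneg (hP0 x) _) (Real.rpow_nonneg (hQ0 x) _)
  have hsq : (betaAff l P Q) ^ 2 ≤ (betaB l p q) ^ 2 := by
    apply pow_le_pow_left₀ hBA0 hBA 2
  have hconst : 0 ≤ c * pr ^ l * (1 - pr) ^ (1 - l) := by
    have : 0 < 1 - pr := by linarith
    positivity
  calc c * pr ^ l * (1 - pr) ^ (1 - l) * (betaAff l P Q) ^ 2
      ≤ c * pr ^ l * (1 - pr) ^ (1 - l) * (betaB l p q) ^ 2 :=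
        mul_le_mul_of_nonneg_left hsq hconst
    _ ≤ bayesErrB pr p q := hBer p ⟨hp0, hp1⟩ q ⟨hq0, hq1⟩
    _ ≤ bayesErr pr P Q := hEB
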